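/- arXiv:1204.2025 — 2 statements merged into one kernel-verified Lean document; each statement's English description precedes it below -/
import Mathlib

section
/- A Hadamard manifold X (or more generally a proper CAT(0) space) that is uniformly visible is Gromov hyperbolic: there exists δ > 0 such that for every geodesic triangle in X, each side is contained in the δ-neighborhood of the union of the other two sides. -/
open Set

/-- `γ` is a (unit-speed) geodesic segment from `x` to `y`, parametrised on `[0, dist x y]`. -/
def IsGeodesicSegment {X : Type*} [MetricSpace X] (γ : ℝ → X) (x y : X) : Prop :=
  γ 0 = x ∧ γ (dist x y) = y ∧
    ∀ s ∈ Set.Icc (0 : ℝ) (dist x y), ∀ t ∈ Set.Icc (0 : ℝ) (dist x y),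
      dist (γ s) (γ t) = |s - t|

/-- A geodesic metric space: any two points are joined by a geodesic segment. -/
def IsGeodesicSpace (X : Type*) [MetricSpace X] : Prop :=
  ∀ x y : X, ∃ γ : ℝ → X, IsGeodesicSegment γ x y

/-- The Euclidean comparison angle at `p` of the triangle with vertices `p, x, y`,
computed from the side lengths by the law of cosines. -/
noncomputable def compAngle {X : Type*} [MetricSpace X] (p x y : X) : ℝ :=
  Real.arccos ((dist p x ^ 2 + dist p y ^ 2 - dist x y ^ 2) / (2 * dist p x * dist p y))

/-- `m` is a midpoint of `y` and `z`. -/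
def IsMidpoint {X : Type*} [MetricSpace X] (m y z : X) : Prop :=
  dist y m = dist y z / 2 ∧ dist m z = dist y z / 2

/-- The CAT(0) condition, via the midpoint comparison inequality in a geodesic space. -/
def IsCAT0 (X : Type*) [MetricSpace X] : Prop :=
  IsGeodesicSpace X ∧ ∀ x y z m : X, IsMidpoint m y z →
    dist x m ^ 2 ≤ (dist x y ^ 2 + dist x z ^ 2) / 2 - dist y z ^ 2 / 4

/-- Uniform visibility: for every `ε > 0` there is `R(ε) ≥ 0`, independent of `p`, such that any
geodesic segment staying at distance at least `R(ε)` from `p` subtends a (comparison) angle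
less than `ε` at `p`. -/
def UniformlyVisible (X : Type*) [MetricSpace X] : Prop :=
  ∀ ε > (0 : ℝ), ∃ R ≥ (0 : ℝ), ∀ (p x y : X) (γ : ℝ → X), IsGeodesicSegment γ x y →
    (∀ t ∈ Set.Icc (0 : ℝ) (dist x y), R ≤ dist p (γ t)) → compAngle p x y < ε

/-- Local visibility: the constant `R(p, ε)` may depend on the point `p`. -/
def LocallyVisible (X : Type*) [MetricSpace X] : Prop :=
  ∀ (p : X), ∀ ε > (0 : ℝ), ∃ R ≥ (0 : ℝ), ∀ (x y : X) (γ : ℝ → X), IsGeodesicSegment γ x y →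
    (∀ t ∈ Set.Icc (0 : ℝ) (dist x y), R ≤ dist p (γ t)) → compAngle p x y < ε

/-- δ-thin (Rips) triangles: each side of every geodesic triangle lies in the
δ-neighbourhood of the union of the other two sides. -/
def ThinTriangles (X : Type*) [MetricSpace X] (δ : ℝ) : Prop :=
  ∀ (x y z : X) (γxy γyz γxz : ℝ → X),
    IsGeodesicSegment γxy x y → IsGeodesicSegment γyz y z → IsGeodesicSegment γxz x z →
    ∀ t ∈ Set.Icc (0 : ℝ) (dist x z),
      ∃ s, (s ∈ Set.Icc (0 : ℝ) (dist x y) ∧ dist (γxz t) (γxy s) ≤ δ) ∨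
           (s ∈ Set.Icc (0 : ℝ) (dist y z) ∧ dist (γxz t) (γyz s) ≤ δ)

/-- The Gromov product of `x` and `y` at the basepoint `p`. -/
noncomputable def gromovProd {X : Type*} [MetricSpace X] (p x y : X) : ℝ :=
  (dist p x + dist p y - dist x y) / 2

/-- If the comparison angle at `p` is less than `π/3`, the law of cosines gives a strict
quantitative bound on the opposite side. -/
lemma angle_lt_pi_div_three_bound {X : Type*} [MetricSpace X] (p x y : X)
    (ha : 0 < dist p x) (hb : 0 < dist p y) (h : compAngle p x y < Real.pi / 3) :
    dist x y ^ 2 < dist p x ^ 2 + dist p y ^ 2 - dist p x * dist p y := by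
  set a := dist p x with hadef
  set b := dist p y with hbdef
  set d := dist x y with hddef
  have htri1 : d ≤ a + b := by
    have := dist_triangle x p y
    simpa [hadef, hbdef, hddef, dist_comm] using this
  have htri2 : a ≤ b + d := by
    have := dist_triangle p y x
    simpa [hadef, hbdef, hddef, dist_comm] using this
  have htri3 : b ≤ a + d := by
    have := dist_triangle p x y
    simpa [hadef, hbdef, hddef, dist_comm] using this
  have hd0 : 0 ≤ d := dist_nonneg
  set Q : ℝ := (a ^ 2 + b ^ 2 - d ^ 2) / (2 * a * b) with hQdef
  have hden : (0 : ℝ) < 2 * a * b := by positivity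
  have hQ1 : Q ≤ 1 := by
    rw [hQdef, div_le_one hden]
    nlinarith [sq_nonneg (a - b - d), sq_nonneg (a - b + d)]
  have hQm1 : -1 ≤ Q := by
    rw [hQdef, le_div_iff₀ hden]
    nlinarith [sq_nonneg (a + b - d)]
  have hpi3 : Real.pi / 3 ≤ Real.pi := by linarith [Real.pi_pos]
  have hcos : Real.cos (Real.pi / 3) < Real.cos (Real.arccos Q) :=
    Real.cos_lt_cos_of_nonneg_of_le_pi (Real.arccos_nonneg Q) hpi3 h
  rw [Real.cos_arccos hQm1 hQ1, Real.cos_pi_div_three] at hcos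
  rw [hQdef, lt_div_iff₀ hden] at hcos
  nlinarith [hcos]

/-- Convexity of the squared distance along a geodesic in a CAT(0) space
(quadrilateral comparison), in a division-free form. -/
lemma cat0_sq_dist_convex {X : Type*} [MetricSpace X] (hCAT : IsCAT0 X)
    (γ : ℝ → X) (L : ℝ) (hL : 0 ≤ L)
    (hiso : ∀ s ∈ Set.Icc (0 : ℝ) L, ∀ t ∈ Set.Icc (0 : ℝ) L, dist (γ s) (γ t) = |s - t|)
    (q : X) {s : ℝ} (hs : s ∈ Set.Icc (0 : ℝ) L) :
    L * dist q (γ s) ^ 2 ≤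
      (L - s) * dist q (γ 0) ^ 2 + s * dist q (γ L) ^ 2 - L * (s * (L - s)) := by
  set f : ℝ → ℝ := fun u => dist q (γ u) ^ 2 with hfdef
  -- the function whose nonpositivity on [0, L] we want
  set G : ℝ → ℝ := fun u => L * f u - ((L - u) * f 0 + u * f L) + L * (u * (L - u))
    with hGdef
  suffices hG : ∀ u ∈ Set.Icc (0 : ℝ) L, G u ≤ 0 by
    have := hG s hs
    simp only [hGdef, hfdef] at this
    linarith
  -- continuity of f on [0, L]
  have hlip : LipschitzOnWith 1 γ (Set.Icc (0 : ℝ) L) := by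
    apply LipschitzOnWith.of_dist_le_mul
    intro u hu v hv
    rw [hiso u hu v hv]
    simp [Real.dist_eq]
  have hfc : ContinuousOn f (Set.Icc (0 : ℝ) L) := by
    apply ContinuousOn.pow
    exact (Continuous.dist continuous_const continuous_id).comp_continuousOn hlip.continuousOn
  intro u hu
  -- it suffices to show `G u ≤ η * (u * (L - u))` for every `η > 0`
  have key : ∀ η : ℝ, 0 < η → G u ≤ η * (u * (L - u)) := by
    intro η hη
    set F : ℝ → ℝ := fun v => G v - η * (v * (L - v)) with hFdef
    have hFc : ContinuousOn F (Set.Icc (0 : ℝ) L) := by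
      apply ContinuousOn.sub
      · apply ContinuousOn.add
        · exact ((continuousOn_const.mul hfc).sub (by fun_prop))
        · fun_prop
      · fun_prop
    obtain ⟨m, hm, hmax⟩ := isCompact_Icc.exists_isMaxOn
      (Set.nonempty_Icc.mpr hL) hFc
    have hFm : F m ≤ 0 := by
      by_contra hpos
      push_neg at hpos
      have hF0 : F 0 = 0 := by simp [hFdef, hGdef]
      have hFL : F L = 0 := by simp [hFdef, hGdef]
      have hm0 : m ≠ 0 := by rintro rfl; rw [hF0] at hpos; exact lt_irrefl 0 hpos
      have hmL : m ≠ L := by rintro rfl; rw [hFL] at hpos; exact lt_irrefl 0 hpos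
      have hm1 : 0 < m := lt_of_le_of_ne hm.1 (Ne.symm hm0)
      have hm2 : m < L := lt_of_le_of_ne hm.2 hmL
      set r : ℝ := min m (L - m) with hrdef
      have hr : 0 < r := lt_min hm1 (by linarith)
      have hrm : r ≤ m := min_le_left _ _
      have hrLm : r ≤ L - m := min_le_right _ _
      have hs1 : m - r ∈ Set.Icc (0 : ℝ) L := ⟨by linarith, by linarith⟩
      have hs2 : m + r ∈ Set.Icc (0 : ℝ) L := ⟨by linarith, by linarith⟩
      have hmm : m ∈ Set.Icc (0 : ℝ) L := ⟨hm1.le, hm2.le⟩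
      have hd12 : dist (γ (m - r)) (γ (m + r)) = 2 * r := by
        rw [hiso _ hs1 _ hs2]
        rw [abs_of_nonpos (by linarith)]; ring
      have hd1m : dist (γ (m - r)) (γ m) = r := by
        rw [hiso _ hs1 _ hmm, abs_of_nonpos (by linarith)]; ring
      have hdm2 : dist (γ m) (γ (m + r)) = r := by
        rw [hiso _ hmm _ hs2, abs_of_nonpos (by linarith)]; ring
      have hmid : IsMidpoint (γ m) (γ (m - r)) (γ (m + r)) := by
        refine ⟨?_, ?_⟩
        · rw [hd1m, hd12]; ring
        · rw [hdm2, hd12]; ring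
      have hcat := hCAT.2 q (γ (m - r)) (γ (m + r)) (γ m) hmid
      rw [hd12] at hcat
      -- hcat : f m ≤ (f (m-r) + f (m+r)) / 2 - (2r)^2/4
      have h1 : F (m - r) ≤ F m := hmax hs1
      have h2 : F (m + r) ≤ F m := hmax hs2
      simp only [hFdef, hGdef, hfdef] at h1 h2
      have hLr : 0 ≤ L := hL
      nlinarith [mul_pos hη (mul_pos hr hr), mul_le_mul_of_nonneg_left hcat hLr]
    have := hmax hu
    have hFu : F u ≤ 0 := le_trans (this) hFm
    simp only [hFdef] at hFu
    linarith
  -- let η → 0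
  have hC : 0 ≤ u * (L - u) := mul_nonneg hu.1 (by linarith [hu.2])
  by_contra hGu
  push_neg at hGu
  have hη : 0 < G u / (u * (L - u) + 1) := by positivity
  have := key _ hη
  rw [div_mul_eq_mul_div, le_div_iff₀ (by positivity)] at this
  nlinarith

/-- a proper CAT(0) space (in particular a Hadamard manifold) which is uniformly
visible is Gromov hyperbolic: there is `δ > 0` such that all geodesic triangles are δ-thin. -/
theorem uniformly_visible_implies_hyperbolic (X : Type*) [MetricSpace X] [ProperSpace X]
    (hCAT : IsCAT0 X) (hvis : UniformlyVisible X) :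
    ∃ δ > (0 : ℝ), ThinTriangles X δ := by
  obtain ⟨R, hR0, hR⟩ := hvis (Real.pi / 3) (by positivity)
  refine ⟨R + 1, by linarith, ?_⟩
  intro x y z γxy γyz γxz hxy hyz hxz t ht
  by_contra hcon
  push_neg at hcon
  set δ : ℝ := R + 1 with hδdef
  set p : X := γxz t with hpdef
  set L : ℝ := dist x z with hLdef
  -- basic distances
  have h0L : (0 : ℝ) ∈ Set.Icc (0 : ℝ) L := ⟨le_refl 0, dist_nonneg⟩
  have hLL : L ∈ Set.Icc (0 : ℝ) L := ⟨dist_nonneg, le_refl L⟩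
  have hpx : dist p x = t := by
    rw [hpdef, ← hxz.1, hxz.2.2 t ht 0 h0L, sub_zero, abs_of_nonneg ht.1]
  have hpz : dist p z = L - t := by
    rw [hpdef, ← hxz.2.1, hxz.2.2 t ht L hLL, abs_of_nonpos (by linarith [ht.2])]; ring
  -- the contradiction hypothesis: p is far from both other sides
  have hfar1 : ∀ s ∈ Set.Icc (0 : ℝ) (dist x y), δ < dist p (γxy s) := by
    intro s hs; exact (hcon s).1 hs
  have hfar2 : ∀ s ∈ Set.Icc (0 : ℝ) (dist y z), δ < dist p (γyz s) := by
    intro s hs; exact (hcon s).2 hs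
  -- hence p is far from the three vertices
  have hax : δ < dist p x := by
    have := hfar1 0 ⟨le_refl 0, dist_nonneg⟩; rwa [hxy.1] at this
  have hby : δ < dist p y := by
    have := hfar1 (dist x y) ⟨dist_nonneg, le_refl _⟩; rwa [hxy.2.1] at this
  have hcz : δ < dist p z := by
    have := hfar2 (dist y z) ⟨dist_nonneg, le_refl _⟩; rwa [hyz.2.1] at this
  have hδpos : (0 : ℝ) < δ := by rw [hδdef]; linarith
  -- visibility gives small comparison angles
  have hang1 : compAngle p x y < Real.pi / 3 := by
    apply hR p x y γxy hxy
    intro s hs; linarith [hfar1 s hs]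
  have hang2 : compAngle p y z < Real.pi / 3 := by
    apply hR p y z γyz hyz
    intro s hs; linarith [hfar2 s hs]
  have ha : 0 < dist p x := lt_trans hδpos hax
  have hb : 0 < dist p y := lt_trans hδpos hby
  have hc : 0 < dist p z := lt_trans hδpos hcz
  have hbd1 := angle_lt_pi_div_three_bound p x y ha hb hang1
  have hbd2 := angle_lt_pi_div_three_bound p y z hb hc hang2
  -- CAT(0) convexity along [x, z] applied to the point y
  have hconv := cat0_sq_dist_convex hCAT γxz L dist_nonneg hxz.2.2 y ht
  rw [hxz.1, hxz.2.1, ← hpdef] at hconv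
  -- put everything together
  rw [hpx] at hbd1 ha
  rw [hpz] at hbd2 hc
  have hdy : dist y p = dist p y := dist_comm y p
  have hdyx : dist y x = dist x y := dist_comm y x
  rw [hdy, hdyx] at hconv
  set b := dist p y with hbdef
  set dxy := dist x y with hdxydef
  set dyz := dist y z with hdyzdef
  -- hconv : L * b^2 ≤ (L - t) * dxy^2 + t * dyz^2 - L * (t * (L - t))
  nlinarith [mul_lt_mul_of_pos_left hbd1 hc, mul_lt_mul_of_pos_left hbd2 ha,
    mul_pos (mul_pos ha hb) hc]
end

section
/- Let X be a locally visible CAT(0) space admitting a cocompact isometric group action (i.e., there is a group acting by isometries with compact quotient). Then X is uniformly visible. -/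
open Set

private lemma cos_compAngle' {X : Type*} [MetricSpace X] (p x y : X)
    (hpx : 0 < dist p x) (hpy : 0 < dist p y) :
    Real.cos (compAngle p x y)
      = (dist p x ^ 2 + dist p y ^ 2 - dist x y ^ 2) / (2 * dist p x * dist p y) := by
  have h1 : dist x y ≤ dist p x + dist p y := by
    have := dist_triangle x p y; rwa [dist_comm x p] at this
  have h2 : dist p x ≤ dist p y + dist x y := by
    have := dist_triangle p y x; rwa [dist_comm y x] at this
  have h3 : dist p y ≤ dist p x + dist x y := dist_triangle p x y
  apply Real.cos_arccos
  · rw [le_div_iff₀ (by positivity)]; nlinarith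
  · rw [div_le_iff₀ (by positivity)]; nlinarith

private lemma compAngle_mem_Icc {X : Type*} [MetricSpace X] (p x y : X) :
    compAngle p x y ∈ Set.Icc 0 Real.pi :=
  ⟨Real.arccos_nonneg _, Real.arccos_le_pi _⟩

set_option maxHeartbeats 1000000 in
/-- Pure real-number core of the transfer estimate. -/
private lemma real_core (a b c a' b' s R : ℝ)
    (hs : 0 < s) (hs2 : s ≤ 2) (hRs : 21 ≤ R * s) (hRpos : 0 < R)
    (hax : R ≤ a) (hay : R ≤ b)
    (haa' : a - a' ≤ 1) (haa'' : a' - a ≤ 1) (hbb' : b - b' ≤ 1) (hbb'' : b' - b ≤ 1)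
    (hq1 : c ≤ a' + b') (hq2 : a' ≤ b' + c) (hq3 : b' ≤ a' + c)
    (hp1 : c ≤ a + b) (hp2 : a ≤ b + c) (hp3 : b ≤ a + c)
    (hq' : (1 - s / 8) * (2 * a' * b') < a' ^ 2 + b' ^ 2 - c ^ 2) :
    (1 - s) * (2 * a * b) < a ^ 2 + b ^ 2 - c ^ 2 := by
  have hRbig : 21 / 2 ≤ R := by
    have h2R : R * s ≤ R * 2 := mul_le_mul_of_nonneg_left hs2 hRpos.le
    linarith
  have ha : (0:ℝ) < a := by linarith
  have hb : (0:ℝ) < b := by linarith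
  have ha' : (0:ℝ) < a' := by linarith
  have hb' : (0:ℝ) < b' := by linarith
  have huv' : (c - a' + b') * (c + a' - b') < a' * b' * s / 4 := by linarith [hq']
  have hunn : 0 ≤ c - a + b := by linarith
  have hvnn : 0 ≤ c + a - b := by linarith
  have hu : c - a + b ≤ (c - a' + b') + 2 := by linarith
  have hv : c + a - b ≤ (c + a' - b') + 2 := by linarith
  have huv : (c - a + b) * (c + a - b) ≤ ((c - a' + b') + 2) * ((c + a' - b') + 2) :=
    mul_le_mul hu hv hvnn (by linarith)
  have hu'2b : c - a' + b' ≤ 2 * b' := by linarith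
  have hv'2a : c + a' - b' ≤ 2 * a' := by linarith
  have ha'2 : a' ≤ 2 * a := by linarith
  have hb'2 : b' ≤ 2 * b := by linarith
  have ha'b' : a' * b' ≤ 4 * (a * b) := by
    calc a' * b' ≤ (2 * a) * (2 * b) := mul_le_mul ha'2 hb'2 hb'.le (by linarith)
      _ = 4 * (a * b) := by ring
  have habs : a' * b' * s / 4 ≤ a * b * s := by
    have h := mul_le_mul_of_nonneg_right ha'b' hs.le
    linarith
  have huvbig : (c - a + b) * (c + a - b) ≤ a * b * s + 8 * a + 8 * b + 4 := by
    linarith [huv, huv', hu'2b, hv'2a, habs]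
  have h21a : 21 * a ≤ a * b * s := by
    have hbs : 21 ≤ b * s := le_trans hRs (mul_le_mul_of_nonneg_right hay hs.le)
    have := mul_le_mul_of_nonneg_left hbs ha.le
    linarith [this]
  have h21b : 21 * b ≤ a * b * s := by
    have has : 21 ≤ a * s := le_trans hRs (mul_le_mul_of_nonneg_right hax hs.le)
    have := mul_le_mul_of_nonneg_left has hb.le
    linarith [this]
  have hfin : (c - a + b) * (c + a - b) < 2 * (a * b * s) := by
    have hab21 : 21 ≤ a + b := by linarith
    linarith [huvbig, h21a, h21b]
  linarith [hfin]

set_option maxHeartbeats 1000000 in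
/-- The key quantitative transfer lemma: if the comparison angle at `q` is very small and `p`
is within distance `1` of `q`, while the endpoints are very far from `p`, then the comparison
angle at `p` is less than `ε₀`. -/
private lemma compAngle_transfer {X : Type*} [MetricSpace X] (p q x y : X) (ε₀ R : ℝ)
    (hε₀ : 0 < ε₀) (hπ : ε₀ ≤ Real.pi)
    (hR : 21 / (1 - Real.cos ε₀) ≤ R)
    (hd : dist p q ≤ 1)
    (hax : R ≤ dist p x) (hay : R ≤ dist p y)
    (hq : compAngle q x y < Real.arccos (1 - (1 - Real.cos ε₀) / 8)) :
    compAngle p x y < ε₀ := by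
  have hcos1 : Real.cos ε₀ < 1 := by
    have := Real.cos_lt_cos_of_nonneg_of_le_pi (le_refl 0) hπ hε₀
    simpa using this
  have hs : (0:ℝ) < 1 - Real.cos ε₀ := by linarith
  have hs2 : (1:ℝ) - Real.cos ε₀ ≤ 2 := by
    have := Real.neg_one_le_cos ε₀; linarith
  have hRs : 21 ≤ R * (1 - Real.cos ε₀) := by
    rw [div_le_iff₀ hs] at hR; linarith
  have hRpos : 0 < R := lt_of_lt_of_le (div_pos (by norm_num) hs) hR
  have ha : (0:ℝ) < dist p x := lt_of_lt_of_le hRpos hax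
  have hb : (0:ℝ) < dist p y := lt_of_lt_of_le hRpos hay
  have haa' : |dist p x - dist q x| ≤ dist p q := by
    have := abs_dist_sub_le p q x; simpa using this
  have hbb' : |dist p y - dist q y| ≤ dist p q := by
    have := abs_dist_sub_le p q y; simpa using this
  rw [abs_le] at haa' hbb'
  have hRbig : 21 / 2 ≤ R := by
    have h2R : R * (1 - Real.cos ε₀) ≤ R * 2 :=
      mul_le_mul_of_nonneg_left hs2 hRpos.le
    linarith
  have ha' : (0:ℝ) < dist q x := by linarith [haa'.1, haa'.2, hd]
  have hb' : (0:ℝ) < dist q y := by linarith [hbb'.1, hbb'.2, hd]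
  -- angle at q: cosine bound
  have hcosε' : Real.cos (Real.arccos (1 - (1 - Real.cos ε₀) / 8))
      = 1 - (1 - Real.cos ε₀) / 8 :=
    Real.cos_arccos (by linarith) (by linarith)
  have hcosq : 1 - (1 - Real.cos ε₀) / 8 < Real.cos (compAngle q x y) := by
    rw [← hcosε']
    exact Real.strictAntiOn_cos
      (compAngle_mem_Icc q x y) ⟨Real.arccos_nonneg _, Real.arccos_le_pi _⟩ hq
  rw [cos_compAngle' q x y ha' hb'] at hcosq
  have hq' : (1 - (1 - Real.cos ε₀) / 8) * (2 * dist q x * dist q y)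
      < dist q x ^ 2 + dist q y ^ 2 - dist x y ^ 2 := by
    rw [lt_div_iff₀ (by positivity)] at hcosq; linarith
  have hcore := real_core (dist p x) (dist p y) (dist x y) (dist q x) (dist q y)
    (1 - Real.cos ε₀) R hs hs2 hRs hRpos hax hay
    (by linarith [haa'.2, hd]) (by linarith [haa'.1, hd])
    (by linarith [hbb'.2, hd]) (by linarith [hbb'.1, hd])
    (by have := dist_triangle x q y; rw [dist_comm x q] at this; exact this)
    (by have := dist_triangle q y x; rw [dist_comm y x] at this; exact this)
    (dist_triangle q x y)
    (by have := dist_triangle x p y; rw [dist_comm x p] at this; exact this)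
    (by have := dist_triangle p y x; rw [dist_comm y x] at this; exact this)
    (dist_triangle p x y) hq'
  have hcosp : Real.cos ε₀ < Real.cos (compAngle p x y) := by
    rw [cos_compAngle' p x y ha hb, lt_div_iff₀ (by positivity)]
    linarith [hcore]
  by_contra hcon
  push_neg at hcon
  have := Real.cos_le_cos_of_nonneg_of_le_pi hε₀.le (compAngle_mem_Icc p x y).2 hcon
  linarith

/-- a locally visible CAT(0) space admitting a cocompact isometric group action is
uniformly visible. -/
theorem cocompact_locally_visible_implies_uniformly_visible (X : Type*) [MetricSpace X]
    (Γ : Type*) [Group Γ] [MulAction Γ X]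
    (hiso : ∀ g : Γ, Isometry fun x : X => g • x)
    (hcocompact : ∃ K : Set X, IsCompact K ∧ ∀ x : X, ∃ g : Γ, g • x ∈ K)
    (hCAT : IsCAT0 X) (hloc : LocallyVisible X) :
    UniformlyVisible X := by
  intro ε hε
  obtain ⟨K, hKcomp, hKact⟩ := hcocompact
  set ε₀ : ℝ := min ε Real.pi with hε₀def
  have hε₀pos : 0 < ε₀ := lt_min hε Real.pi_pos
  have hε₀π : ε₀ ≤ Real.pi := min_le_right _ _
  have hε₀ε : ε₀ ≤ ε := min_le_left _ _
  have hcos1 : Real.cos ε₀ < 1 := by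
    have := Real.cos_lt_cos_of_nonneg_of_le_pi (le_refl 0) hε₀π hε₀pos
    simpa using this
  set ε' : ℝ := Real.arccos (1 - (1 - Real.cos ε₀) / 8) with hε'def
  have hε'pos : 0 < ε' := Real.arccos_pos.2 (by linarith)
  choose Rf hRf0 hRf using fun q : X => hloc q ε' hε'pos
  -- finite subcover of K by unit balls
  have hcover : K ⊆ ⋃ q : X, Metric.ball q 1 := fun k _ =>
    Set.mem_iUnion.2 ⟨k, Metric.mem_ball_self one_pos⟩
  obtain ⟨t, ht⟩ := hKcomp.elim_finite_subcover (fun q : X => Metric.ball q 1)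
    (fun q => Metric.isOpen_ball) hcover
  obtain ⟨M, hM⟩ := (t.image Rf).exists_le
  refine ⟨max (max (M + 1) 1) (21 / (1 - Real.cos ε₀)), ?_, ?_⟩
  · exact le_trans zero_le_one (le_trans (le_max_right _ _) (le_max_left _ _))
  set R : ℝ := max (max (M + 1) 1) (21 / (1 - Real.cos ε₀)) with hRdef
  intro p x y γ hγ hfar
  obtain ⟨g, hgK⟩ := hKact p
  have hgiso := hiso g
  have hdg : ∀ u v : X, dist (g • u) (g • v) = dist u v := fun u v => hgiso.dist_eq u v
  -- transported data
  have hdxy : dist (g • x) (g • y) = dist x y := hdg x y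
  have hγ' : IsGeodesicSegment (fun t => g • γ t) (g • x) (g • y) := by
    obtain ⟨h0, h1, h2⟩ := hγ
    refine ⟨by show g • γ 0 = g • x; rw [h0], by show g • γ _ = g • y; rw [hdxy, h1], ?_⟩
    intro s hs u hu
    rw [hdxy] at hs hu
    rw [hdg]; exact h2 s hs u hu
  have hfar' : ∀ u ∈ Set.Icc (0:ℝ) (dist (g • x) (g • y)), R ≤ dist (g • p) (g • γ u) := by
    intro u hu; rw [hdxy] at hu; rw [hdg]; exact hfar u hu
  have hcompeq : compAngle p x y = compAngle (g • p) (g • x) (g • y) := by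
    unfold compAngle; rw [hdg, hdg, hdg]
  -- find q in the finite cover near g • p
  have : g • p ∈ ⋃ q ∈ t, Metric.ball q 1 := ht hgK
  simp only [Set.mem_iUnion] at this
  obtain ⟨q, hqt, hqball⟩ := this
  have hdpq : dist (g • p) q ≤ 1 := le_of_lt (by simpa [Metric.mem_ball, dist_comm] using hqball)
  have hMq : Rf q ≤ M := hM _ (Finset.mem_image_of_mem Rf hqt)
  have hR1 : M + 1 ≤ R := le_trans (le_max_left _ _) (le_max_left _ _)
  -- the geodesic is far from q
  have hfarq : ∀ u ∈ Set.Icc (0:ℝ) (dist (g • x) (g • y)), Rf q ≤ dist q ((fun t => g • γ t) u) := by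
    intro u hu
    have h1 : R ≤ dist (g • p) (g • γ u) := hfar' u hu
    have h2 : dist (g • p) (g • γ u) ≤ dist (g • p) q + dist q (g • γ u) := dist_triangle _ _ _
    linarith
  have hangq : compAngle q (g • x) (g • y) < ε' := hRf q (g • x) (g • y) _ hγ' hfarq
  -- endpoints are far from g • p
  have hd0 : (0:ℝ) ≤ dist (g • x) (g • y) := dist_nonneg
  have hax : R ≤ dist (g • p) (g • x) := by
    have h := hfar' 0 ⟨le_rfl, hd0⟩
    rwa [hγ.1] at h
  have hay : R ≤ dist (g • p) (g • y) := by
    have h := hfar' (dist (g • x) (g • y)) ⟨hd0, le_rfl⟩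
    rwa [hdxy, hγ.2.1] at h
  rw [hcompeq]
  have := compAngle_transfer (g • p) q (g • x) (g • y) ε₀ R hε₀pos hε₀π
    (le_max_right _ _) hdpq hax hay hangq
  linarith
end
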